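/- Let X be a projective scheme over an algebraically closed field, let A be a globally generated line bundle, B a very ample line bundle with L := A ⊗ B, and suppose that the space I(X,B)_2 of quadrics through X in P(H^0(B)) is spanned by quadrics of rank at most r. If the multiplication map S^2H^0(X,A) ⊗ I(X,B)_2 → I(X,L)_2 is surjective, then I(X,L)_2 is spanned by quadrics of rank at most r. -/
import Mathlib


open TensorProduct

namespace Stmt16

variable {k : Type*} [Field k]

/-- A symmetric `2`-tensor (a quadric) has rank at most `r` if it is a linear combination
of `r` squares `w ⊗ w`; over a field of characteristic `≠ 2` this is the Gram rank. -/
def RankLE {W : Type*} [AddCommGroup W] [Module k W] (r : ℕ) (q : W ⊗[k] W) : Prop :=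
  ∃ (c : Fin r → k) (w : Fin r → W), q = ∑ i, c i • (w i ⊗ₜ[k] w i)

/-- (Abstract form of Lemma 7.5.)  Let `X ⊆ P(H⁰(B))` be embedded by a
very ample line bundle `B`, let `A` be globally generated and `L = A ⊗ B`.  Writing
`WA = H⁰(A)`, `WB = H⁰(B)`, `WL = H⁰(L)` with multiplication `m : WA ⊗ WB → WL`, let
`IB ⊆ S²WB` and `IL ⊆ S²WL` be the spaces of quadrics through `X` in the two embeddings,
and let `Φ : (WA ⊗ WA) ⊗ (WB ⊗ WB) → WL ⊗ WL` be the induced multiplication of quadrics.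
If `IB` is spanned by its quadrics of rank at most `r` and the multiplication map
`S²WA ⊗ IB → IL` is surjective (i.e. `Φ` maps the span of the tensors `(a ⊗ a) ⊗ q`,
`q ∈ IB`, onto `IL`), then `IL` is spanned by its quadrics of rank at most `r`. -/
theorem quadrics_of_rank_le_span
    (h2 : (2 : k) ≠ 0)
    {WA WB WL : Type*}
    [AddCommGroup WA] [Module k WA] [AddCommGroup WB] [Module k WB]
    [AddCommGroup WL] [Module k WL]
    (m : WA ⊗[k] WB →ₗ[k] WL)
    (IB : Submodule k (WB ⊗[k] WB)) (IL : Submodule k (WL ⊗[k] WL)) (r : ℕ)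
    (hIB : IB ≤ Submodule.span k {q : WB ⊗[k] WB | q ∈ IB ∧ RankLE r q})
    (hsurj : Submodule.map
        ((TensorProduct.map m m).comp
          (TensorProduct.tensorTensorTensorComm k WA WA WB WB).toLinearMap)
        (Submodule.span k {x : (WA ⊗[k] WA) ⊗[k] (WB ⊗[k] WB) |
          ∃ (a : WA) (q : WB ⊗[k] WB), q ∈ IB ∧ x = (a ⊗ₜ[k] a) ⊗ₜ[k] q}) = IL) :
    IL ≤ Submodule.span k {q : WL ⊗[k] WL | q ∈ IL ∧ RankLE r q} := by
  set Φ : (WA ⊗[k] WA) ⊗[k] (WB ⊗[k] WB) →ₗ[k] WL ⊗[k] WL :=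
    (TensorProduct.map m m).comp
      (TensorProduct.tensorTensorTensorComm k WA WA WB WB).toLinearMap with hΦ
  set T : Set ((WA ⊗[k] WA) ⊗[k] (WB ⊗[k] WB)) :=
    {x | ∃ (a : WA) (q : WB ⊗[k] WB), q ∈ IB ∧ x = (a ⊗ₜ[k] a) ⊗ₜ[k] q} with hT
  set S : Set (WL ⊗[k] WL) := {q | q ∈ IL ∧ RankLE r q} with hS
  -- any Φ ((a⊗a)⊗q) with q ∈ IB lies in IL
  have hmemIL : ∀ (a : WA) (q : WB ⊗[k] WB), q ∈ IB → Φ ((a ⊗ₜ[k] a) ⊗ₜ[k] q) ∈ IL := by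
    intro a q hq
    rw [← hsurj]
    exact Submodule.mem_map_of_mem (Submodule.subset_span ⟨a, q, hq, rfl⟩)
  have key : Submodule.map Φ (Submodule.span k T) ≤ Submodule.span k S := by
    rw [Submodule.map_span, Submodule.span_le]
    rintro _ ⟨x, ⟨a, q, hqIB, rfl⟩, rfl⟩
    have hq' : q ∈ Submodule.span k {q : WB ⊗[k] WB | q ∈ IB ∧ RankLE r q} := hIB hqIB
    clear hqIB
    induction hq' using Submodule.span_induction with
    | mem q hq =>
        obtain ⟨hqI, c, w, rfl⟩ := hq
        refine Submodule.subset_span ⟨hmemIL a _ hqI, c, fun i => m (a ⊗ₜ[k] w i), ?_⟩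
        simp only [hΦ, TensorProduct.tmul_sum, TensorProduct.tmul_smul, map_sum, map_smul,
          LinearMap.coe_comp, LinearEquiv.coe_coe, Function.comp_apply,
          TensorProduct.tensorTensorTensorComm_tmul, TensorProduct.map_tmul]
    | zero => simp
    | add x y _ _ hx hy =>
        rw [TensorProduct.tmul_add, map_add]
        exact Submodule.add_mem _ hx hy
    | smul c x _ hx =>
        rw [TensorProduct.tmul_smul, map_smul]
        exact Submodule.smul_mem _ _ hx
  intro x hx
  rw [← hsurj] at hx
  exact key hx

end Stmt16
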